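/- Z₀ is a P-ideal: for every countable collection {a_n : n < ω} of subsets of ℕ each of asymptotic density zero, there exists a set a ⊆ ℕ of asymptotic density zero such that a_n ∖ a is finite for every n. -/

import Mathlib

open Filter Set Cardinal

/-- A set of naturals has asymptotic density zero. -/
def DensityZero (A : Set ℕ) : Prop :=
  Tendsto (fun n : ℕ => ((A ∩ Set.Iio n).ncard : ℝ) / n) atTop (nhds 0)

lemma densityZero_union {A B : Set ℕ} (hA : DensityZero A) (hB : DensityZero B) :
    DensityZero (A ∪ B) := by
  have h0 : Tendsto (fun n : ℕ => ((A ∩ Set.Iio n).ncard : ℝ) / n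
      + ((B ∩ Set.Iio n).ncard : ℝ) / n) atTop (nhds 0) := by
    simpa using hA.add hB
  apply squeeze_zero (fun n => by positivity) _ h0
  intro n
  rw [← add_div]
  apply div_le_div_of_nonneg_right ?_ (by positivity)
  have : (A ∪ B) ∩ Set.Iio n = (A ∩ Set.Iio n) ∪ (B ∩ Set.Iio n) := by
    rw [Set.union_inter_distrib_right]
  rw [this]
  exact_mod_cast Set.ncard_union_le _ _

lemma accumulate_succ' (a : ℕ → Set ℕ) (k : ℕ) :
    Set.accumulate a (k + 1) = Set.accumulate a k ∪ a (k + 1) := by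
  ext x
  simp only [Set.mem_accumulate, Set.mem_union, Nat.le_add_one_iff]
  aesop

lemma densityZero_accumulate (a : ℕ → Set ℕ) (ha : ∀ n : ℕ, DensityZero (a n)) (k : ℕ) :
    DensityZero (Set.accumulate a k) := by
  induction k with
  | zero => simpa [Set.accumulate_def] using ha 0
  | succ k ih => rw [accumulate_succ']; exact densityZero_union ih (ha (k+1))

theorem stmt18 (a : ℕ → Set ℕ) (ha : ∀ n : ℕ, DensityZero (a n)) :
    ∃ b : Set ℕ, DensityZero b ∧ ∀ n : ℕ, (a n \ b).Finite := by
  -- thresholds from density zero of accumulated sets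
  have hM : ∀ k : ℕ, ∃ M : ℕ, ∀ n ≥ M,
      ((Set.accumulate a k ∩ Set.Iio n).ncard : ℝ) / n ≤ 1 / (k + 1) := by
    intro k
    have h := (densityZero_accumulate a ha k).eventually
      (gt_mem_nhds (show (0:ℝ) < 1 / (k+1) by positivity))
    rcases eventually_atTop.1 h with ⟨M, hMp⟩
    exact ⟨M, fun n hn => (hMp n hn).le⟩
  choose M hMspec using hM
  set N : ℕ → ℕ := fun k => k + (Finset.range (k+1)).sup M with hN
  have hNmono : StrictMono N := by
    intro i j hij
    have h1 : (Finset.range (i+1)).sup M ≤ (Finset.range (j+1)).sup M :=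
      Finset.sup_mono (by simpa using Nat.succ_le_succ hij.le)
    simp only [hN]
    omega
  have hNM : ∀ k, M k ≤ N k := fun k =>
    le_trans (Finset.le_sup (by simp : k ∈ Finset.range (k+1))) (Nat.le_add_left _ _)
  set b : Set ℕ := ⋃ k, Set.accumulate a k ∩ Set.Ici (N k) with hb
  refine ⟨b, ?_, ?_⟩
  · -- density zero
    rw [DensityZero, Metric.tendsto_atTop]
    intro ε hε
    obtain ⟨k, hk⟩ := exists_nat_one_div_lt hε
    refine ⟨N k + 1, fun n hn => ?_⟩
    have hNkn : N k ≤ n := by omega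
    -- find the greatest j with N j ≤ n
    set j := Nat.findGreatest (fun j => N j ≤ n) n with hj
    have hNle : ∀ i : ℕ, i ≤ N i := fun i => Nat.le_add_right i _
    have hkn : k ≤ n := le_trans (hNle k) hNkn
    have hkj : k ≤ j := Nat.le_findGreatest hkn hNkn
    have hNjn : N j ≤ n :=
      Nat.findGreatest_spec (P := fun j => N j ≤ n) (m := k) hkn hNkn
    have hNj1 : n < N (j + 1) := by
      by_cases h : j + 1 ≤ n
      · have := Nat.findGreatest_is_greatest (P := fun j => N j ≤ n) (lt_add_one j) h
        omega
      · have := hNle (j + 1)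
        omega
    have hsub : b ∩ Set.Iio n ⊆ Set.accumulate a j ∩ Set.Iio n := by
      rintro m ⟨hmb, hmn⟩
      rcases Set.mem_iUnion.1 hmb with ⟨i, hmi, hNi⟩
      refine ⟨?_, hmn⟩
      rcases le_or_gt i j with hij | hij
      · exact Set.accumulate_subset_accumulate hij hmi
      · exfalso
        have : N (j+1) ≤ N i := hNmono.monotone hij
        have : N i ≤ m := hNi
        have hmn' : m < n := hmn
        omega
    have hcard : ((b ∩ Set.Iio n).ncard : ℝ) ≤ ((Set.accumulate a j ∩ Set.Iio n).ncard : ℝ) := by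
      exact_mod_cast Set.ncard_le_ncard hsub ((Set.finite_Iio n).inter_of_right _)
    have hnpos : (0:ℝ) < n := by
      have : 1 ≤ n := by omega
      exact_mod_cast this
    have h1 : ((b ∩ Set.Iio n).ncard : ℝ) / n ≤ 1 / (j + 1) :=
      le_trans (div_le_div_of_nonneg_right hcard hnpos.le)
        (hMspec j n (le_trans (hNM j) hNjn))
    have h2 : (1:ℝ) / (j + 1) ≤ 1 / (k + 1) := by
      apply one_div_le_one_div_of_le (by positivity)
      exact_mod_cast Nat.succ_le_succ hkj
    rw [Real.dist_eq, sub_zero, abs_of_nonneg (by positivity)]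
    calc ((b ∩ Set.Iio n).ncard : ℝ) / n ≤ 1 / (j+1) := h1
      _ ≤ 1 / (k+1) := h2
      _ < ε := hk
  · -- almost containment
    intro n
    apply Set.Finite.subset (Set.finite_Iio (N n))
    rintro m ⟨hma, hmb⟩
    by_contra h
    apply hmb
    exact Set.mem_iUnion.2 ⟨n, Set.subset_accumulate hma, by simpa using not_lt.1 h⟩
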